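/- Let D be a digraph containing a cycle C and a transitive tournament T on a vertex set disjoint from C, with |V(T)| ≥ 2⌈√(2t+9/4)+1/2⌉+1, such that between every vertex of C and every vertex of T there is at least one arc (in some direction). Then for every k ≥ max{t+1, 3⌈log₂(t+1)⌉} there exist vertices u, v of D and at least t+1 distinct walks of length k from u to v. -/

import Mathlib

/-- A walk of length `k` in the digraph with arc relation `A`,
given as its sequence of `k+1` vertices. -/
def IsWalk {V : Type*} (A : V → V → Prop) {k : ℕ} (w : Fin (k+1) → V) : Prop :=
  ∀ i : Fin k, A (w i.castSucc) (w i.succ)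

/-- A walk of length `k` from `u` to `v`. -/
def IsWalkFrom {V : Type*} (A : V → V → Prop) (k : ℕ) (u v : V) (w : Fin (k+1) → V) : Prop :=
  IsWalk A w ∧ w 0 = u ∧ w (Fin.last k) = v

/-- A (directed) cycle of length `m ≥ 1`: a closed walk whose first `m` vertices are distinct. -/
def IsCycle {V : Type*} (A : V → V → Prop) (m : ℕ) (c : Fin (m+1) → V) : Prop :=
  1 ≤ m ∧ IsWalk A c ∧ c (Fin.last m) = c 0 ∧
    Function.Injective (fun i : Fin m => c i.castSucc)

/-- There exist at least `s` pairwise distinct walks of length `k` from `u` to `v`. -/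
def HasWalks {V : Type*} (A : V → V → Prop) (k s : ℕ) (u v : V) : Prop :=
  ∃ f : Fin s → (Fin (k+1) → V), Function.Injective f ∧ ∀ i, IsWalkFrom A k u v (f i)

namespace Stmt8
open Finset

variable {V : Type*}

/-- main reduction: a family of lists gives HasWalks -/
lemma hasWalks_of_family (A : V → V → Prop) (k s : ℕ) (u v : V)
    {P : Type*} [Fintype P] (hcard : s ≤ Fintype.card P)
    (L : P → List V)
    (hlen : ∀ p, (L p).length = k + 1)
    (hch : ∀ p, (L p).Chain' A)
    (hinj : Function.Injective L)
    (hu : ∀ p (h : 0 < (L p).length), (L p).get ⟨0, h⟩ = u)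
    (hv : ∀ p (h : k < (L p).length), (L p).get ⟨k, h⟩ = v) :
    HasWalks A k s u v := by
  obtain ⟨e⟩ : Nonempty (Fin s ↪ P) := Function.Embedding.nonempty_of_card_le
    (by simpa using hcard)
  refine ⟨fun i => fun q => (L (e i)).get ⟨q.val, by rw [hlen]; exact q.isLt⟩, ?_, ?_⟩
  · intro i j hij
    have hLij : L (e i) = L (e j) := by
      apply List.ext_get (by rw [hlen, hlen])
      intro n h1 h2
      exact congrFun hij ⟨n, by rw [hlen] at h1; exact h1⟩
    exact e.injective (hinj hLij) |> fun h => h ▸ rfl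
  · intro i
    refine ⟨?_, ?_, ?_⟩
    · intro q
      have := List.isChain_iff_getElem.1 (hch (e i)) q.val (by rw [hlen]; omega)
      exact this
    · exact hu _ _
    · exact hv _ _

section Cyc
variable (lc : ℕ) (c : Fin (lc+1) → V)

/-- the cycle as a periodic stream -/
def cyc (hlc : 1 ≤ lc) (n : ℕ) : V := c ⟨n % lc, by have := Nat.mod_lt n hlc; omega⟩

variable {lc c} {A : V → V → Prop}

lemma cyc_congr (hlc : 1 ≤ lc) {x y : ℕ} (h : x % lc = y % lc) :
    cyc lc c hlc x = cyc lc c hlc y := by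
  unfold cyc; congr 1; exact Fin.ext h

lemma cyc_arc (hc : IsCycle A lc c) (n : ℕ) :
    A (cyc lc c hc.1 (n)) (cyc lc c hc.1 (n+1)) := by
  obtain ⟨h1, hw, hcl, -⟩ := hc
  have hm : n % lc < lc := Nat.mod_lt n h1
  have key : (n % lc + 1) % lc = (n + 1) % lc := Nat.mod_add_mod n lc 1
  have harc := hw ⟨n % lc, hm⟩
  have E1 : cyc lc c h1 n = c ((⟨n % lc, hm⟩ : Fin lc).castSucc) := by
    rfl
  by_cases h2 : n % lc + 1 < lc
  · have e : (n + 1) % lc = n % lc + 1 := by rw [← key]; exact Nat.mod_eq_of_lt h2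
    have E2 : cyc lc c h1 (n+1) = c ((⟨n % lc, hm⟩ : Fin lc).succ) := by
      unfold cyc; congr 1; exact Fin.ext (by simpa using e)
    rw [E1, E2]; exact harc
  · have hnl : n % lc + 1 = lc := by omega
    have e : (n + 1) % lc = 0 := by rw [← key, hnl, Nat.mod_self]
    have E2 : cyc lc c h1 (n+1) = c 0 := by
      unfold cyc; congr 1; exact Fin.ext (by simpa using e)
    have E3 : (⟨n % lc, hm⟩ : Fin lc).succ = Fin.last lc := Fin.ext (by simpa using hnl)
    rw [E1, E2, ← hcl, ← E3]; exact harc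

lemma cyc_eq_c (hlc : 1 ≤ lc) (hcl : c (Fin.last lc) = c 0) (i : Fin (lc+1)) :
    c i = cyc lc c hlc i.val := by
  by_cases h : i.val < lc
  · unfold cyc; congr 1; apply Fin.ext; simp [Nat.mod_eq_of_lt h]
  · have : i = Fin.last lc := by apply Fin.ext; have := i.isLt; simp; omega
    rw [this, hcl]
    unfold cyc; congr 1; apply Fin.ext
    simp [Nat.mod_self]

/-- ride list along the cycle -/
def ride (hlc : 1 ≤ lc) (o len : ℕ) : List V := List.ofFn (fun q : Fin len => cyc lc c hlc (o + q.val))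

lemma ride_length (hlc : 1 ≤ lc) (o len : ℕ) : (ride (c := c) hlc o len).length = len := by
  simp [ride]

lemma ride_get (hlc : 1 ≤ lc) (o len : ℕ) (q : ℕ) (h : q < (ride (c := c) hlc o len).length) :
    (ride (c := c) hlc o len).get ⟨q, h⟩ = cyc lc c hlc (o + q) := by
  simp [ride]

lemma ride_chain (hc : IsCycle A lc c) (o len : ℕ) :
    (ride (c := c) hc.1 o len).Chain' A := by
  unfold List.Chain'
  rw [List.isChain_iff_getElem]
  intro q hq
  have e1 := ride_get (c := c) hc.1 o len q (by omega)
  have e2 := ride_get (c := c) hc.1 o len (q+1) hq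
  simp only [List.get_eq_getElem] at e1 e2
  rw [e1, e2]
  have : o + (q+1) = (o + q) + 1 := by omega
  rw [this]
  exact cyc_arc hc _

lemma ride_head? (hlc : 1 ≤ lc) (o len : ℕ) (h : 0 < len) :
    (ride (c := c) hlc o len).head? = some (cyc lc c hlc o) := by
  rw [List.head?_eq_getElem?]
  have hl : 0 < (ride (c := c) hlc o len).length := by rw [ride_length]; exact h
  rw [List.getElem?_eq_getElem hl]
  have := ride_get (c := c) hlc o len 0 hl
  simp only [List.get_eq_getElem] at this
  rw [this]
  simp

lemma ride_getLast? (hlc : 1 ≤ lc) (o len : ℕ) (h : 0 < len) :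
    (ride (c := c) hlc o len).getLast? = some (cyc lc c hlc (o + (len - 1))) := by
  rw [List.getLast?_eq_getElem?]
  have hl : (ride (c := c) hlc o len).length - 1 < (ride (c := c) hlc o len).length := by
    rw [ride_length]; omega
  rw [List.getElem?_eq_getElem hl]
  have := ride_get (c := c) hlc o len ((ride (c := c) hlc o len).length - 1) hl
  simp only [List.get_eq_getElem] at this
  rw [this, ride_length]

end Cyc


lemma get_zero_of_head? (l : List V) (x : V) (h : l.head? = some x) (hl : 0 < l.length) :
    l.get ⟨0, hl⟩ = x := by
  rw [List.head?_eq_getElem?, List.getElem?_eq_getElem hl] at h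
  simpa [List.get_eq_getElem] using (Option.some_injective _ h)

lemma get_last_of_getLast? (l : List V) (x : V) (h : l.getLast? = some x)
    (hl : l.length - 1 < l.length) : l.get ⟨l.length - 1, hl⟩ = x := by
  rw [List.getLast?_eq_getElem?, List.getElem?_eq_getElem hl] at h
  simpa [List.get_eq_getElem] using (Option.some_injective _ h)

lemma min'_insert_bot {α : Type*} [LinearOrder α] (a : α) (S : Finset α) (h : ∀ b ∈ S, a ≤ b) :
    (insert a S).min' (insert_nonempty a S) = a := by
  apply le_antisymm (min'_le _ _ (mem_insert_self a S))
  apply le_min'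
  intro y hy
  rcases mem_insert.1 hy with rfl | hy
  · exact le_rfl
  · exact h y hy

lemma max'_insert_top {α : Type*} [LinearOrder α] (a : α) (S : Finset α) (h : ∀ b ∈ S, b ≤ a) :
    (insert a S).max' (insert_nonempty a S) = a := by
  apply le_antisymm
  · apply max'_le
    intro y hy
    rcases mem_insert.1 hy with rfl | hy
    · exact le_rfl
    · exact h y hy
  · exact le_max' _ _ (mem_insert_self a S)

section TL
variable (m : ℕ) (g : Fin m → V)

/-- the sorted tournament list -/
def TL (S : Finset (Fin m)) : List V := (S.sort (· ≤ ·)).map g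

variable {m g} {A : V → V → Prop}

lemma TL_length (S : Finset (Fin m)) : (TL m g S).length = S.card := by
  simp [TL, Finset.length_sort]

lemma TL_chain (hT : ∀ i j : Fin m, A (g i) (g j) ↔ i < j) (S : Finset (Fin m)) :
    (TL m g S).Chain' A := by
  unfold TL
  unfold List.Chain'
  rw [List.isChain_map]
  exact List.Pairwise.isChain ((Finset.sortedLT_sort S).pairwise.imp (fun h => (hT _ _).2 h))

lemma TL_head? (S : Finset (Fin m)) (hne : S.Nonempty) :
    (TL m g S).head? = some (g (S.min' hne)) := by
  unfold TL
  rw [List.head?_map]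
  have hl : 0 < (S.sort (· ≤ ·)).length := by
    rw [Finset.length_sort]; exact Finset.card_pos.2 hne
  rw [List.head?_eq_getElem?, List.getElem?_eq_getElem hl]
  have := Finset.sorted_zero_eq_min'_aux S hl hne
  simp only [List.get_eq_getElem] at this
  rw [this]; rfl

lemma TL_getLast? (S : Finset (Fin m)) (hne : S.Nonempty) :
    (TL m g S).getLast? = some (g (S.max' hne)) := by
  unfold TL
  rw [List.getLast?_map]
  have hl : (S.sort (· ≤ ·)).length - 1 < (S.sort (· ≤ ·)).length := by
    rw [Finset.length_sort]
    have := Finset.card_pos.2 hne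
    omega
  rw [List.getLast?_eq_getElem?, List.getElem?_eq_getElem hl]
  have := Finset.sorted_last_eq_max'_aux S hl hne
  rw [this]; rfl

lemma TL_mem {S : Finset (Fin m)} {x : V} (h : x ∈ TL m g S) : ∃ j ∈ S, x = g j := by
  unfold TL at h
  rw [List.mem_map] at h
  obtain ⟨j, hj, rfl⟩ := h
  exact ⟨j, (Finset.mem_sort _).1 hj, rfl⟩

lemma TL_inj (hg : Function.Injective g) : Function.Injective (TL m g) := by
  intro S S' h
  have hs : S.sort (· ≤ ·) = S'.sort (· ≤ ·) := List.map_injective_iff.2 hg h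
  rw [← Finset.sort_toFinset S (· ≤ ·), ← Finset.sort_toFinset S' (· ≤ ·), hs]

end TL


lemma mono_choose (n : ℕ) : ∀ j, j ≤ n/2 → ∀ i, i ≤ j → n.choose i ≤ n.choose j := by
  intro j
  induction j with
  | zero =>
    intro _ i hi
    have h0 : i = 0 := Nat.le_zero.mp hi
    rw [h0]
  | succ q ih =>
    intro hj i hi
    rcases Nat.eq_or_lt_of_le hi with rfl | hlt
    · exact le_rfl
    · exact le_trans (ih (by omega) i (by omega))
        (Nat.choose_le_succ_of_lt_half_left (by omega))

lemma choose2_le_choose (n j : ℕ) (h2 : 2 ≤ j) (hj : j + 2 ≤ n) :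
    n.choose 2 ≤ n.choose j := by
  rcases le_or_gt j (n / 2) with h | h
  · exact mono_choose n j h 2 h2
  · have hsym : n.choose j = n.choose (n - j) := (Nat.choose_symm (by omega)).symm
    rw [hsym]
    exact mono_choose n (n - j) (by omega) 2 (by omega)

lemma mul_pred_le_two_pow : ∀ p : ℕ, 3 ≤ p → p * (p-1) ≤ 2^p := by
  intro p
  induction p with
  | zero => omega
  | succ q ih =>
    intro h
    rcases Nat.lt_or_ge q 3 with h3 | h3
    · have hq : q = 2 := by omega
      subst hq
      norm_num
    · have h1 := ih h3
      obtain ⟨r, rfl⟩ : ∃ r, q = r + 3 := ⟨q - 3, by omega⟩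
      have h2 : (r+4) * (r+3) ≤ 2 * ((r+3) * (r+2)) := by nlinarith
      calc (r+3+1) * ((r+3+1) - 1) = (r+4) * (r+3) := by
            rw [Nat.add_sub_cancel]
        _ ≤ 2 * ((r+3) * (r+2)) := h2
        _ = 2 * ((r+3) * ((r+3) - 1)) := rfl
        _ ≤ 2 * 2^(r+3) := by omega
        _ = 2^(r+3+1) := by rw [pow_succ]; ring

lemma le_choose_two (p M t : ℕ) (hp : 3 ≤ p) (ht : 2*(t+1) ≤ p*(p-1)) (hM : 2*p - 1 ≤ M) :
    t + 1 ≤ M.choose 2 := by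
  rw [Nat.choose_two_right]
  rw [Nat.le_div_iff_mul_le (by norm_num)]
  have h1 : p * (p-1) ≤ M * (M-1) := Nat.mul_le_mul (by omega) (by omega)
  omega

lemma master_count (p M N t : ℕ) (hp : 3 ≤ p) (hM : 2*p - 1 ≤ M)
    (hN2 : 2 ≤ N) (hN4 : N ≤ 4) (ht : 2*(t+1) ≤ p*(p-1)) : t + 1 ≤ M.choose N := by
  rcases le_or_gt (N+2) M with h | h
  · exact le_trans (le_choose_two p M t hp ht hM) (choose2_le_choose M N hN2 h)
  · have hM5 : M = 5 := by omega
    have hN4' : N = 4 := by omega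
    have hp3 : p = 3 := by omega
    subst hM5 hN4' hp3
    have h5 : (5:ℕ).choose 4 = 5 := by decide
    omega

lemma card_val_filter (m a b : ℕ) (hbm : b ≤ m) :
    (univ.filter (fun j : Fin m => a ≤ j.val ∧ j.val < b)).card = b - a := by
  have himg : (univ.filter (fun j : Fin m => a ≤ j.val ∧ j.val < b)).image (Fin.val)
      = Finset.Ico a b := by
    ext z
    simp only [Finset.mem_image, Finset.mem_filter, Finset.mem_univ, true_and, Finset.mem_Ico]
    constructor
    · rintro ⟨j, ⟨h1, h2⟩, rfl⟩; exact ⟨h1, h2⟩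
    · rintro ⟨h1, h2⟩; exact ⟨⟨z, by omega⟩, ⟨h1, h2⟩, rfl⟩
  have hcard := Finset.card_image_of_injective
    (univ.filter (fun j : Fin m => a ≤ j.val ∧ j.val < b)) (Fin.val_injective)
  rw [himg] at hcard
  rw [← hcard, Nat.card_Ico]

lemma card_val_filter2 (m a : ℕ) (ha : a + 4 ≤ m) :
    (univ.filter (fun j : Fin m => (j.val = a ∨ a + 2 ≤ j.val) ∧ j.val ≤ m - 2)).card
      = m - 2 - a := by
  have himg : (univ.filter (fun j : Fin m => (j.val = a ∨ a + 2 ≤ j.val) ∧ j.val ≤ m - 2)).image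
      (Fin.val) = insert a (Finset.Icc (a+2) (m-2)) := by
    ext z
    simp only [Finset.mem_image, Finset.mem_filter, Finset.mem_univ, true_and,
      Finset.mem_insert, Finset.mem_Icc]
    constructor
    · rintro ⟨j, ⟨h1, h2⟩, rfl⟩
      rcases h1 with h1 | h1
      · exact Or.inl h1
      · exact Or.inr ⟨h1, h2⟩
    · intro h
      rcases h with h | ⟨h1, h2⟩
      · exact ⟨⟨z, by omega⟩, ⟨Or.inl h, show z ≤ m - 2 by omega⟩, rfl⟩
      · exact ⟨⟨z, by omega⟩, ⟨Or.inr h1, h2⟩, rfl⟩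
  have hcard := Finset.card_image_of_injective
    (univ.filter (fun j : Fin m => (j.val = a ∨ a + 2 ≤ j.val) ∧ j.val ≤ m - 2))
    (Fin.val_injective)
  rw [himg] at hcard
  rw [← hcard, Finset.card_insert_of_notMem (by simp), Nat.card_Icc]
  omega

variable {A : V → V → Prop}

lemma min'_eq_of_bot {α : Type*} [LinearOrder α] {S : Finset α} {a : α} (ha : a ∈ S)
    (h : ∀ b ∈ S, a ≤ b) : S.min' ⟨a, ha⟩ = a :=
  le_antisymm (min'_le _ _ ha) (le_min' _ _ _ h)

lemma max'_eq_of_top {α : Type*} [LinearOrder α] {S : Finset α} {a : α} (ha : a ∈ S)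
    (h : ∀ b ∈ S, b ≤ a) : S.max' ⟨a, ha⟩ = a :=
  le_antisymm (max'_le _ _ _ h) (le_max' _ _ ha)

lemma family_pureT {m : ℕ} {g : Fin m → V} (hg : Function.Injective g)
    (hT : ∀ i j : Fin m, A (g i) (g j) ↔ i < j)
    (t k : ℕ) (hm7 : 7 ≤ m) (hk3 : 3 ≤ k) (hkm : k + 3 ≤ m)
    (hcount : t + 1 ≤ (m-2).choose (k-1)) :
    ∃ u v, HasWalks A k (t+1) u v := by
  classical
  set B : Finset (Fin m) := univ.filter (fun j : Fin m => 1 ≤ j.val ∧ j.val < m - 1) with hB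
  have hBcard : B.card = m - 2 := by
    have h := card_val_filter m 1 (m-1) (by omega)
    rw [hB, h]; omega
  set z0 : Fin m := ⟨0, by omega⟩ with hz0
  set zl : Fin m := ⟨m-1, by omega⟩ with hzl
  have hz0zl : z0 ≠ zl := by
    intro h; apply_fun Fin.val at h; simp [hz0, hzl] at h; omega
  have hz0S : ∀ T : Finset (Fin m), T ∈ B.powersetCard (k-1) → z0 ∉ insert zl T := by
    intro T hT'
    rw [mem_powersetCard] at hT'
    simp only [mem_insert]
    push_neg
    refine ⟨hz0zl, fun h' => ?_⟩
    have := hT'.1 h'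
    rw [hB, mem_filter] at this
    simp [hz0] at this
  have hzlS : ∀ T : Finset (Fin m), T ∈ B.powersetCard (k-1) → zl ∉ T := by
    intro T hT' h'
    have hmem := (mem_powersetCard.1 hT').1 h'
    rw [hB, mem_filter] at hmem
    have hx : m - 1 < m - 1 := hmem.2.2
    omega
  have hfull : ∀ T : Finset (Fin m), T ∈ B.powersetCard (k-1) →
      (insert z0 (insert zl T)).card = k + 1 := by
    intro T hT'
    rw [card_insert_of_notMem (hz0S T hT'), card_insert_of_notMem (hzlS T hT'),
      (mem_powersetCard.1 hT').2]
    omega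
  refine ⟨g z0, g zl, ?_⟩
  refine hasWalks_of_family A k (t+1) (g z0) (g zl)
    (P := ↥(B.powersetCard (k-1)))
    (by rw [Fintype.card_coe, card_powersetCard, hBcard]; exact hcount)
    (fun S => TL m g (insert z0 (insert zl S.val))) ?_ ?_ ?_ ?_ ?_
  · intro S
    rw [TL_length]
    exact hfull S.val S.2
  · intro S
    exact TL_chain hT _
  · intro S S' h
    have h2 := TL_inj hg h
    apply Subtype.ext
    have e1 : insert zl S.val = insert zl S'.val := by
      have h3 := congrArg (fun T => Finset.erase T z0) h2
      simpa [Finset.erase_insert (hz0S S.val S.2), Finset.erase_insert (hz0S S'.val S'.2)]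
        using h3
    have h4 := congrArg (fun T => Finset.erase T zl) e1
    simpa [Finset.erase_insert (hzlS S.val S.2), Finset.erase_insert (hzlS S'.val S'.2)]
      using h4
  · intro S h
    apply get_zero_of_head?
    rw [TL_head? _ (insert_nonempty _ _)]
    congr 2
    apply min'_eq_of_bot (mem_insert_self _ _)
    intro b _
    rw [Fin.le_def]
    simp [hz0]
  · intro S h
    have hlen : (TL m g (insert z0 (insert zl S.val))).length = k + 1 := by
      rw [TL_length]; exact hfull S.val S.2
    have h2 : (TL m g (insert z0 (insert zl S.val))).length - 1 <
        (TL m g (insert z0 (insert zl S.val))).length := by omega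
    have h3 := get_last_of_getLast? (TL m g (insert z0 (insert zl S.val))) (g zl) ?_ h2
    · rw [show (⟨k, h⟩ : Fin _) = ⟨_, h2⟩ from Fin.ext (by simp [hlen])]
      exact h3
    · rw [TL_getLast? _ (insert_nonempty _ _)]
      congr 2
      apply max'_eq_of_top (mem_insert_of_mem (mem_insert_self _ _))
      intro b _
      rw [Fin.le_def]
      simp only [hzl]
      omega

variable {lc : ℕ} {c : Fin (lc+1) → V}

lemma g_ne_cyc {m : ℕ} {g : Fin m → V} (hdisj : ∀ i j, g i ≠ c j) (hlc : 1 ≤ lc)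
    (j : Fin m) (n : ℕ) : g j ≠ cyc lc c hlc n := hdisj j _

lemma get_of_append_left (l₁ l₂ : List V) (i : ℕ) (hi : i < l₁.length)
    (h : i < (l₁ ++ l₂).length) : (l₁ ++ l₂).get ⟨i, h⟩ = l₁.get ⟨i, hi⟩ := by
  simp [List.get_eq_getElem, List.getElem_append_left hi]

lemma get_of_append_right (l₁ l₂ : List V) (i : ℕ) (hi : l₁.length ≤ i)
    (h2 : i - l₁.length < l₂.length) (h : i < (l₁ ++ l₂).length) :
    (l₁ ++ l₂).get ⟨i, h⟩ = l₂.get ⟨i - l₁.length, h2⟩ := by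
  simp [List.get_eq_getElem, List.getElem_append_right hi]

lemma get_congr (l l' : List V) (h : l = l') (i : ℕ) (hi : i < l.length)
    (hi' : i < l'.length) : l.get ⟨i, hi⟩ = l'.get ⟨i, hi'⟩ := by subst h; rfl

lemma get_idx_congr (l : List V) {i i' : ℕ} (h : i = i') (hi : i < l.length)
    (hi' : i' < l.length) : l.get ⟨i, hi⟩ = l.get ⟨i', hi'⟩ := by subst h; rfl

lemma get_zero_append (l₁ l₂ : List V) (x : V) (h1 : l₁.head? = some x)
    (h : 0 < (l₁ ++ l₂).length) : (l₁ ++ l₂).get ⟨0, h⟩ = x := by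
  have h0 : 0 < l₁.length := by
    cases l₁
    · simp at h1
    · simp
  exact (get_of_append_left l₁ l₂ 0 h0 h).trans (get_zero_of_head? l₁ x h1 h0)

/-- splitting a concatenation along a classifier -/
lemma append_parts_eq {l₁ l₂ l₁' l₂' : List V} (T : V → Prop)
    (hT1 : ∀ x ∈ l₁, T x) (hT1' : ∀ x ∈ l₁', T x)
    (hh : ∀ x, l₂.head? = some x → ¬ T x) (hh' : ∀ x, l₂'.head? = some x → ¬ T x)
    (heq : l₁ ++ l₂ = l₁' ++ l₂') : l₁ = l₁' ∧ l₂ = l₂' := by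
  have main : ∀ (a₁ a₂ b₁ b₂ : List V), a₁ ++ a₂ = b₁ ++ b₂ →
      (∀ x ∈ b₁, T x) → (∀ x, a₂.head? = some x → ¬ T x) →
      a₁.length < b₁.length → False := by
    intro a₁ a₂ b₁ b₂ he hb ha hlt
    have hlen := congrArg List.length he
    simp only [List.length_append] at hlen
    have ha2 : a₂ ≠ [] := by
      intro h0
      rw [h0] at hlen
      simp at hlen
      omega
    have hi : a₁.length < (a₁ ++ a₂).length := by
      simp only [List.length_append]
      have := List.length_pos_iff.2 ha2
      omega
    have hv1 : (a₁ ++ a₂).get ⟨a₁.length, hi⟩ = a₂.head ha2 := by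
      refine (get_of_append_right _ _ _ le_rfl (by
        simp only [Nat.sub_self]
        exact List.length_pos_iff.2 ha2) hi).trans ?_
      refine (get_idx_congr _ (Nat.sub_self _) _ (by
        have := List.length_pos_iff.2 ha2; omega)).trans ?_
      apply get_zero_of_head?
      exact List.head?_eq_head ha2
    have hi' : a₁.length < (b₁ ++ b₂).length := by rw [← he]; exact hi
    have hv2 : (b₁ ++ b₂).get ⟨a₁.length, hi'⟩ ∈ b₁ := by
      rw [get_of_append_left _ _ _ hlt]
      exact List.get_mem _ _
    have := get_congr _ _ he a₁.length hi hi'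
    rw [hv1] at this
    rw [← this] at hv2
    exact (ha _ (List.head?_eq_head ha2)) (hb _ hv2)
  rcases Nat.lt_trichotomy l₁.length l₁'.length with hlt | he | hlt
  · exact absurd heq (fun h => main l₁ l₂ l₁' l₂' h hT1' hh hlt)
  · exact List.append_inj heq he
  · exact absurd heq (fun h => main l₁' l₂' l₁ l₂ h.symm hT1 hh' hlt)

lemma off_mod (lc w : ℕ) (hlc : 1 ≤ lc) : ((lc - w % lc) % lc + w) % lc = 0 := by
  have h1 : w % lc < lc := Nat.mod_lt _ hlc
  have hd := Nat.div_add_mod w lc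
  rw [Nat.mod_add_mod]
  have e : lc - w % lc + w = lc + lc * (w / lc) := by omega
  rw [e, Nat.add_mul_mod_self_left, Nat.mod_self]

def sinkL (lc' : ℕ) (c' : Fin (lc'+1) → V) (hlc : 1 ≤ lc') (m' : ℕ) (g' : Fin m' → V)
    (z0 : Fin m') (k : ℕ) (S : Finset (Fin m')) : List V :=
  TL m' g' (insert z0 S) ++
    ride (c := c') hlc ((lc' - ((k - S.card - 1) % lc')) % lc') (k - S.card)

def srcL (lc' : ℕ) (c' : Fin (lc'+1) → V) (hlc : 1 ≤ lc') (m' : ℕ) (g' : Fin m' → V)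
    (zl : Fin m') (k : ℕ) (S : Finset (Fin m')) : List V :=
  ride (c := c') hlc 0 (k - S.card) ++ TL m' g' (insert zl S)

lemma mem_TL_isT {m : ℕ} {g : Fin m → V} {S : Finset (Fin m)} {x : V}
    (h : x ∈ TL m g S) : ∃ j, x = g j := by
  obtain ⟨j, _, hj⟩ := TL_mem h
  exact ⟨j, hj⟩

lemma mem_ride_isC (hlc : 1 ≤ lc) {o len : ℕ} {x : V} (h : x ∈ ride (c := c) hlc o len) :
    ∃ n, x = cyc lc c hlc n := by
  rw [ride, List.mem_ofFn] at h
  obtain ⟨i, hi⟩ := h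
  exact ⟨o + i.val, hi.symm⟩

lemma family_sink (hc : IsCycle A lc c)
    {m : ℕ} {g : Fin m → V} (hg : Function.Injective g)
    (hT : ∀ i j : Fin m, A (g i) (g j) ↔ i < j)
    (hdisj : ∀ i j, g i ≠ c j)
    (t k p : ℕ) (hp : 3 ≤ p) (hpm : p + 1 ≤ m) (hkp : p ≤ k)
    (hcount : t + 1 ≤ 2^(p-1))
    (hin : ∀ (n : ℕ) (j : Fin m), j.val < p → A (g j) (cyc lc c hc.1 n)) :
    ∃ u v, HasWalks A k (t+1) u v := by
  classical
  have hlc := hc.1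
  set B : Finset (Fin m) := univ.filter (fun j : Fin m => 1 ≤ j.val ∧ j.val < p) with hB
  have hBcard : B.card = p - 1 := by
    have h := card_val_filter m 1 p (by omega)
    rw [hB, h]
  set z0 : Fin m := ⟨0, by omega⟩ with hz0
  have hz0S : ∀ T : Finset (Fin m), T ∈ B.powerset → z0 ∉ T := by
    intro T hT' h'
    have hmem := (mem_powerset.1 hT') h'
    rw [hB, mem_filter] at hmem
    have hx : 1 ≤ (0:ℕ) := hmem.2.1
    omega
  have hcard : ∀ T : Finset (Fin m), T ∈ B.powerset → (insert z0 T).card = T.card + 1 := by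
    intro T hT'
    rw [card_insert_of_notMem (hz0S T hT')]
  have hcardle : ∀ T : Finset (Fin m), T ∈ B.powerset → T.card + 1 ≤ p := by
    intro T hT'
    have := card_le_card (mem_powerset.1 hT')
    omega
  have hTlen : ∀ S : ↥(B.powerset), (TL m g (insert z0 S.val)).length = S.val.card + 1 := by
    intro S
    rw [TL_length, hcard S.val S.2]
  have hallp : ∀ (S : ↥(B.powerset)) (x : Fin m), x ∈ insert z0 S.val → x.val < p := by
    intro S x hx
    rcases mem_insert.1 hx with rfl | hx
    · exact (show (0:ℕ) < p by omega)
    · have hmem := (mem_powerset.1 S.2) hx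
      rw [hB, mem_filter] at hmem
      exact hmem.2.2
  refine ⟨g z0, cyc lc c hlc 0, ?_⟩
  refine hasWalks_of_family A k (t+1) (g z0) (cyc lc c hlc 0)
    (P := ↥(B.powerset))
    (by rw [Fintype.card_coe, card_powerset, hBcard]; exact hcount)
    (fun S => sinkL lc c hlc m g z0 k S.val) ?_ ?_ ?_ ?_ ?_
  · intro S
    show (sinkL lc c hlc m g z0 k S.val).length = k + 1
    rw [sinkL]
    simp only [List.length_append, TL_length, ride_length]
    rw [hcard S.val S.2]
    have := hcardle S.val S.2
    omega
  · intro S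
    show (sinkL lc c hlc m g z0 k S.val).Chain' A
    unfold List.Chain'
    rw [sinkL, List.isChain_append]
    refine ⟨TL_chain hT _, ride_chain hc _ _, ?_⟩
    intro x hx y hy
    rw [TL_getLast? _ (insert_nonempty _ _)] at hx
    rw [ride_head? hlc _ _ (by have := hcardle S.val S.2; omega)] at hy
    simp only [Option.mem_def, Option.some_inj] at hx hy
    subst hx; subst hy
    exact hin _ _ (hallp S _ ((insert z0 S.val).max'_mem (insert_nonempty _ _)))
  · intro S S' h
    have h' : TL m g (insert z0 S.val) ++ _ = TL m g (insert z0 S'.val) ++ _ := h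
    have hparts := append_parts_eq (fun x => ∃ j, x = g j)
      (fun x hx => mem_TL_isT hx) (fun x hx => mem_TL_isT hx)
      ?_ ?_ h'
    · apply Subtype.ext
      have h2 := TL_inj hg hparts.1
      have h3 := congrArg (fun T => Finset.erase T z0) h2
      simpa [Finset.erase_insert (hz0S S.val S.2), Finset.erase_insert (hz0S S'.val S'.2)]
        using h3
    · intro x hx hTx
      obtain ⟨j, hj⟩ := hTx
      rw [ride_head? hlc _ _ (by have := hcardle S.val S.2; omega)] at hx
      have hx' := Option.some_inj.1 hx
      have hgj : g j = cyc lc c hlc ((lc - ((k - S.val.card - 1) % lc)) % lc) := by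
        rw [← hj, ← hx']
      exact g_ne_cyc hdisj hlc j _ hgj
    · intro x hx hTx
      obtain ⟨j, hj⟩ := hTx
      rw [ride_head? hlc _ _ (by have := hcardle S'.val S'.2; omega)] at hx
      have hx' := Option.some_inj.1 hx
      have hgj : g j = cyc lc c hlc ((lc - ((k - S'.val.card - 1) % lc)) % lc) := by
        rw [← hj, ← hx']
      exact g_ne_cyc hdisj hlc j _ hgj
  · intro S h
    show (sinkL lc c hlc m g z0 k S.val).get ⟨0, h⟩ = g z0
    refine (get_zero_append _ _ _ ?_ h)
    rw [TL_head? _ (insert_nonempty _ _)]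
    congr 2
    apply min'_eq_of_bot (mem_insert_self _ _)
    intro b _
    rw [Fin.le_def]
    exact Nat.zero_le _
  · intro S h
    show (sinkL lc c hlc m g z0 k S.val).get ⟨k, h⟩ = cyc lc c hlc 0
    have hrlen : 1 ≤ k - S.val.card := by have := hcardle S.val S.2; omega
    have h2 : k - (TL m g (insert z0 S.val)).length <
        (ride (c := c) hlc ((lc - ((k - S.val.card - 1) % lc)) % lc) (k - S.val.card)).length := by
      rw [hTlen S, ride_length]; omega
    refine (get_of_append_right _ _ k (by rw [hTlen S]; omega) h2 h).trans ?_
    rw [ride_get]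
    apply cyc_congr
    have e : k - (TL m g (insert z0 S.val)).length = k - S.val.card - 1 := by
      rw [hTlen S]; omega
    rw [e, off_mod lc (k - S.val.card - 1) hlc, Nat.zero_mod]


lemma family_source (hc : IsCycle A lc c)
    {m : ℕ} {g : Fin m → V} (hg : Function.Injective g)
    (hT : ∀ i j : Fin m, A (g i) (g j) ↔ i < j)
    (hdisj : ∀ i j, g i ≠ c j)
    (t k p : ℕ) (hp : 3 ≤ p) (hpm : p + 1 ≤ m) (hkp : p ≤ k)
    (hcount : t + 1 ≤ 2^(p-1))
    (hout : ∀ (n : ℕ) (j : Fin m), m - p ≤ j.val → A (cyc lc c hc.1 n) (g j)) :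
    ∃ u v, HasWalks A k (t+1) u v := by
  classical
  have hlc := hc.1
  set B : Finset (Fin m) := univ.filter (fun j : Fin m => m - p ≤ j.val ∧ j.val < m - 1) with hB
  have hBcard : B.card = p - 1 := by
    have h := card_val_filter m (m - p) (m-1) (by omega)
    rw [hB, h]; omega
  set zl : Fin m := ⟨m - 1, by omega⟩ with hzl
  have hzlS : ∀ T : Finset (Fin m), T ∈ B.powerset → zl ∉ T := by
    intro T hT' h'
    have hmem := (mem_powerset.1 hT') h'
    rw [hB, mem_filter] at hmem
    have hx : m - 1 < m - 1 := hmem.2.2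
    omega
  have hcard : ∀ T : Finset (Fin m), T ∈ B.powerset → (insert zl T).card = T.card + 1 := by
    intro T hT'
    rw [card_insert_of_notMem (hzlS T hT')]
  have hcardle : ∀ T : Finset (Fin m), T ∈ B.powerset → T.card + 1 ≤ p := by
    intro T hT'
    have := card_le_card (mem_powerset.1 hT')
    omega
  have hTlen : ∀ S : ↥(B.powerset), (TL m g (insert zl S.val)).length = S.val.card + 1 := by
    intro S
    rw [TL_length, hcard S.val S.2]
  have hallp : ∀ (S : ↥(B.powerset)) (x : Fin m), x ∈ insert zl S.val → m - p ≤ x.val := by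
    intro S x hx
    rcases mem_insert.1 hx with rfl | hx
    · exact (show m - p ≤ m - 1 by omega)
    · have hmem := (mem_powerset.1 S.2) hx
      rw [hB, mem_filter] at hmem
      exact hmem.2.1
  have hrlen : ∀ S : ↥(B.powerset), 1 ≤ k - S.val.card := by
    intro S
    have := hcardle S.val S.2
    omega
  refine ⟨cyc lc c hlc 0, g zl, ?_⟩
  refine hasWalks_of_family A k (t+1) (cyc lc c hlc 0) (g zl)
    (P := ↥(B.powerset))
    (by rw [Fintype.card_coe, card_powerset, hBcard]; exact hcount)
    (fun S => srcL lc c hlc m g zl k S.val) ?_ ?_ ?_ ?_ ?_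
  · intro S
    show (srcL lc c hlc m g zl k S.val).length = k + 1
    rw [srcL]
    simp only [List.length_append, TL_length, ride_length]
    rw [hcard S.val S.2]
    have := hcardle S.val S.2
    omega
  · intro S
    show (srcL lc c hlc m g zl k S.val).Chain' A
    unfold List.Chain'
    rw [srcL, List.isChain_append]
    refine ⟨ride_chain hc _ _, TL_chain hT _, ?_⟩
    intro x hx y hy
    rw [ride_getLast? hlc _ _ (hrlen S)] at hx
    rw [TL_head? _ (insert_nonempty _ _)] at hy
    simp only [Option.mem_def, Option.some_inj] at hx hy
    subst hx; subst hy
    exact hout _ _ (hallp S _ ((insert zl S.val).min'_mem (insert_nonempty _ _)))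
  · intro S S' h
    have h' : _ ++ TL m g (insert zl S.val) = _ ++ TL m g (insert zl S'.val) := h
    have hparts := append_parts_eq (fun x => ∃ n, x = cyc lc c hlc n)
      (fun x hx => mem_ride_isC hlc hx) (fun x hx => mem_ride_isC hlc hx)
      ?_ ?_ h'
    · apply Subtype.ext
      have h2 := TL_inj hg hparts.2
      have h3 := congrArg (fun T => Finset.erase T zl) h2
      simpa [Finset.erase_insert (hzlS S.val S.2), Finset.erase_insert (hzlS S'.val S'.2)]
        using h3
    · intro x hx hTx
      obtain ⟨n, hn⟩ := hTx
      rw [TL_head? _ (insert_nonempty _ _)] at hx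
      have hx' := Option.some_inj.1 hx
      have : g ((insert zl S.val).min' (insert_nonempty _ _)) = cyc lc c hlc n := by
        rw [hx', ← hn]
      exact g_ne_cyc hdisj hlc _ _ this
    · intro x hx hTx
      obtain ⟨n, hn⟩ := hTx
      rw [TL_head? _ (insert_nonempty _ _)] at hx
      have hx' := Option.some_inj.1 hx
      have : g ((insert zl S'.val).min' (insert_nonempty _ _)) = cyc lc c hlc n := by
        rw [hx', ← hn]
      exact g_ne_cyc hdisj hlc _ _ this
  · intro S h
    show (srcL lc c hlc m g zl k S.val).get ⟨0, h⟩ = cyc lc c hlc 0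
    refine (get_zero_append _ _ _ ?_ h)
    exact ride_head? hlc _ _ (hrlen S)
  · intro S h
    show (srcL lc c hlc m g zl k S.val).get ⟨k, h⟩ = g zl
    have hrl : (ride (c := c) hlc 0 (k - S.val.card)).length = k - S.val.card := ride_length _ _ _
    have h2 : k - (ride (c := c) hlc 0 (k - S.val.card)).length <
        (TL m g (insert zl S.val)).length := by
      rw [hrl, hTlen S]
      have := hcardle S.val S.2
      omega
    refine (get_of_append_right _ _ k (by rw [hrl]; have := hcardle S.val S.2; omega) h2 h).trans ?_
    have e : k - (ride (c := c) hlc 0 (k - S.val.card)).length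
        = (TL m g (insert zl S.val)).length - 1 := by
      rw [hrl, hTlen S]
      have := hcardle S.val S.2
      omega
    refine (get_idx_congr _ e _ (by rw [hTlen S]; omega)).trans ?_
    apply get_last_of_getLast?
    rw [TL_getLast? _ (insert_nonempty _ _)]
    congr 2
    apply max'_eq_of_top (mem_insert_self _ _)
    intro b _
    rw [Fin.le_def]
    simp only [hzl]
    omega


lemma hasWalks_of_streams (A : V → V → Prop) (k s : ℕ) (u v : V)
    (st : ℕ → ℕ → V)
    (harc : ∀ p, p < s → ∀ n, n < k → A (st p n) (st p (n+1)))
    (hu : ∀ p, p < s → st p 0 = u) (hv : ∀ p, p < s → st p k = v)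
    (hinj : ∀ p q, p < s → q < s → p ≠ q → ∃ n, n ≤ k ∧ st p n ≠ st q n) :
    HasWalks A k s u v := by
  refine ⟨fun i => fun z => st i.val z.val, ?_, ?_⟩
  · intro i j hij
    by_contra hne
    obtain ⟨n, hn, hne'⟩ := hinj i.val j.val i.isLt j.isLt
      (fun h => hne (Fin.ext h))
    exact hne' (congrFun hij ⟨n, by omega⟩)
  · intro i
    exact ⟨fun q => harc i.val i.isLt q.val q.isLt, hu i.val i.isLt, hv i.val i.isLt⟩

lemma family_gadget (hc : IsCycle A lc c) (x : V) (i0 : ℕ)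
    (hx : x = cyc lc c hc.1 i0)
    (y₁ y₂ : Bool → V)
    (h1 : ∀ b, A x (y₁ b)) (h2 : ∀ b, A (y₁ b) (y₂ b)) (h3 : ∀ b, A (y₂ b) x)
    (hpair : ∀ b b', y₁ b = y₁ b' → y₂ b = y₂ b' → b = b')
    (t k : ℕ) (hcount : t + 1 ≤ 2^(k/3)) (hk : 3 ≤ k) :
    ∃ u v, HasWalks A k (t+1) u v := by
  classical
  set α := k / 3 with hα
  have hα1 : 1 ≤ α := by omega
  have h3α : 3 * α ≤ k := by omega
  set st : ℕ → ℕ → V := fun p n =>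
    if n < 3*α then
      (if n % 3 = 0 then x else
        if n % 3 = 1 then y₁ (Nat.testBit p (n/3)) else y₂ (Nat.testBit p (n/3)))
    else cyc lc c hc.1 (i0 + (n - 3*α)) with hst
  have Ex : ∀ p n, n < 3*α → n % 3 = 0 → st p n = x := by
    intro p n h e; simp [hst, h, e]
  have Ey1 : ∀ p n, n < 3*α → n % 3 = 1 → st p n = y₁ (Nat.testBit p (n/3)) := by
    intro p n h e; simp [hst, h, e]
  have Ey2 : ∀ p n, n < 3*α → n % 3 = 2 → st p n = y₂ (Nat.testBit p (n/3)) := by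
    intro p n h e; simp [hst, h, e]
  have Ec : ∀ p n, 3*α ≤ n → st p n = cyc lc c hc.1 (i0 + (n - 3*α)) := by
    intro p n h; simp [hst, Nat.not_lt.2 h]
  refine ⟨x, cyc lc c hc.1 (i0 + (k - 3*α)), ?_⟩
  refine hasWalks_of_streams A k (t+1) x (cyc lc c hc.1 (i0 + (k - 3*α))) st ?_ ?_ ?_ ?_
  · intro p hp n hn
    by_cases hlt : n < 3*α
    · have hm := Nat.mod_lt n (show 0 < 3 by norm_num)
      rcases (show n % 3 = 0 ∨ n % 3 = 1 ∨ n % 3 = 2 by omega) with e | e | e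
      · have hlt1 : n + 1 < 3*α := by omega
        have e1 : (n+1) % 3 = 1 := by omega
        have ed : (n+1)/3 = n/3 := by omega
        rw [Ex p n hlt e, Ey1 p (n+1) hlt1 e1, ed]
        exact h1 _
      · have hlt1 : n + 1 < 3*α := by omega
        have e1 : (n+1) % 3 = 2 := by omega
        have ed : (n+1)/3 = n/3 := by omega
        rw [Ey1 p n hlt e, Ey2 p (n+1) hlt1 e1, ed]
        exact h2 _
      · rw [Ey2 p n hlt e]
        by_cases hlt1 : n + 1 < 3*α
        · have e1 : (n+1) % 3 = 0 := by omega
          rw [Ex p (n+1) hlt1 e1]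
          exact h3 _
        · have e1 : n + 1 = 3*α := by omega
          rw [Ec p (n+1) (by omega)]
          have e2 : i0 + (n + 1 - 3*α) = i0 := by omega
          rw [e2, ← hx]
          exact h3 _
    · rw [Ec p n (by omega), Ec p (n+1) (by omega)]
      have e2 : i0 + (n + 1 - 3*α) = (i0 + (n - 3*α)) + 1 := by omega
      rw [e2]
      exact cyc_arc hc _
  · intro p hp
    rw [Ex p 0 (by omega) (by omega)]
  · intro p hp
    exact Ec p k h3α
  · intro p q hp hq hne
    have hbit : ¬ ∀ i, Nat.testBit p i = Nat.testBit q i := fun h =>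
      hne (Nat.eq_of_testBit_eq h)
    push_neg at hbit
    obtain ⟨b, hb⟩ := hbit
    have hbα : b < α := by
      by_contra hge
      push_neg at hge
      have h2α : 2^α ≤ 2^b := Nat.pow_le_pow_right (by norm_num) hge
      have e1 : Nat.testBit p b = false := Nat.testBit_lt_two_pow (by omega)
      have e2 : Nat.testBit q b = false := Nat.testBit_lt_two_pow (by omega)
      rw [e1, e2] at hb
      exact hb rfl
    have hd1 : (3*b+1)/3 = b := by omega
    have hd2 : (3*b+2)/3 = b := by omega
    by_cases hc1 : st p (3*b+1) = st q (3*b+1)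
    · refine ⟨3*b+2, by omega, ?_⟩
      rw [Ey2 p _ (by omega) (by omega), Ey2 q _ (by omega) (by omega), hd2]
      intro hy2
      rw [Ey1 p _ (by omega) (by omega), Ey1 q _ (by omega) (by omega), hd1] at hc1
      exact hb (hpair _ _ hc1 hy2)
    · exact ⟨3*b+1, by omega, hc1⟩


lemma head?_append_left' (l₁ l₂ : List V) (x : V) (h : l₁.head? = some x) :
    (l₁ ++ l₂).head? = some x := by
  cases l₁ with
  | nil => simp at h
  | cons a l => simpa using h

def midL (lc' : ℕ) (c' : Fin (lc'+1) → V) (hlc : 1 ≤ lc') (d : ℕ) (x : V) (π : ℕ) : List V :=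
  List.ofFn (fun q : Fin (3*π - 1) =>
    if q.val % 3 = 0 then cyc lc' c' hlc d
    else if q.val % 3 = 1 then cyc lc' c' hlc (d+1) else x)

lemma midL_length (hlc : 1 ≤ lc) (d : ℕ) (x : V) (π : ℕ) :
    (midL lc c hlc d x π).length = 3*π - 1 := by simp [midL]

lemma midL_get (hlc : 1 ≤ lc) (d : ℕ) (x : V) (π : ℕ) (q : ℕ)
    (h : q < (midL lc c hlc d x π).length) :
    (midL lc c hlc d x π).get ⟨q, h⟩ =
      (if q % 3 = 0 then cyc lc c hlc d
        else if q % 3 = 1 then cyc lc c hlc (d+1) else x) := by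
  simp [midL]

lemma midL_chain (hc : IsCycle A lc c) (d : ℕ) (x : V) (π : ℕ)
    (h2 : A (cyc lc c hc.1 (d+1)) x) (h3 : A x (cyc lc c hc.1 d)) :
    (midL lc c hc.1 d x π).Chain' A := by
  unfold List.Chain'
  rw [List.isChain_iff_getElem]
  intro i hi
  rw [midL_length] at hi
  have e1 := midL_get (c := c) hc.1 d x π i (by rw [midL_length]; omega)
  have e2 := midL_get (c := c) hc.1 d x π (i+1) (by rw [midL_length]; omega)
  simp only [List.get_eq_getElem] at e1 e2
  rw [e1, e2]
  have hm := Nat.mod_lt i (show 0 < 3 by norm_num)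
  rcases (show i % 3 = 0 ∨ i % 3 = 1 ∨ i % 3 = 2 by omega) with e | e | e
  · have e1 : (i+1) % 3 = 1 := by omega
    simp only [e, e1]
    norm_num
    exact cyc_arc hc d
  · have e1 : (i+1) % 3 = 2 := by omega
    simp only [e, e1]
    norm_num
    exact h2
  · have e1 : (i+1) % 3 = 0 := by omega
    simp only [e, e1]
    norm_num
    exact h3

lemma midL_head? (hlc : 1 ≤ lc) (d : ℕ) (x : V) (π : ℕ) (hπ : 1 ≤ π) :
    (midL lc c hlc d x π).head? = some (cyc lc c hlc d) := by
  have hl : 0 < (midL lc c hlc d x π).length := by rw [midL_length]; omega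
  rw [List.head?_eq_getElem?, List.getElem?_eq_getElem hl]
  have := midL_get hlc d x π 0 hl
  simp only [List.get_eq_getElem] at this
  rw [this]
  norm_num

lemma midL_getLast? (hlc : 1 ≤ lc) (d : ℕ) (x : V) (π : ℕ) (hπ : 1 ≤ π) :
    (midL lc c hlc d x π).getLast? = some (cyc lc c hlc (d+1)) := by
  have hl : (midL lc c hlc d x π).length - 1 < (midL lc c hlc d x π).length := by
    rw [midL_length]; omega
  rw [List.getLast?_eq_getElem?, List.getElem?_eq_getElem hl]
  have := midL_get hlc d x π ((midL lc c hlc d x π).length - 1) hl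
  simp only [List.get_eq_getElem] at this
  rw [this, midL_length]
  have e : (3*π - 1 - 1) % 3 = 1 := by omega
  rw [if_neg (by omega), if_pos e]

lemma family_master (hc : IsCycle A lc c)
    {m : ℕ} {g : Fin m → V} (hg : Function.Injective g)
    (hT : ∀ i j : Fin m, A (g i) (g j) ↔ i < j)
    (hdisj : ∀ i j, g i ≠ c j)
    (t k p : ℕ) (hp : 3 ≤ p) (hpm : 2*p + 1 ≤ m) (hpt : 2*(t+1) ≤ p*(p-1))
    (hk5 : 5 ≤ k)
    (d a od : ℕ) (ha : a + 1 ≤ p) (hpod : p ≤ od) (hodm : od ≤ m) (ham : a < m)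
    (hOutA : A (cyc lc c hc.1 (d+1)) (g ⟨a, ham⟩))
    (hInD : ∀ j : Fin m, j.val < od → A (g j) (cyc lc c hc.1 d))
    (hOutHigh : ∀ j : Fin m, a + 2 ≤ j.val → A (cyc lc c hc.1 (d+1)) (g j)) :
    ∃ u v, HasWalks A k (t+1) u v := by
  classical
  have hlc := hc.1
  have hm7 : 7 ≤ m := by omega
  set N := 2 + (k - 2) % 3 with hN
  set π := (k - N) / 3 with hπ
  have hN2 : 2 ≤ N := by omega
  have hN4 : N ≤ 4 := by omega
  have hNπ : N + 3 * π = k := by omega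
  have hπ1 : 1 ≤ π := by omega
  set av : Fin m := ⟨a, ham⟩ with hav
  set z0 : Fin m := ⟨0, by omega⟩ with hz0
  set zl : Fin m := ⟨m - 1, by omega⟩ with hzl
  set B₁ : Finset (Fin m) := univ.filter (fun j : Fin m => 1 ≤ j.val ∧ j.val < od) with hB₁
  set B₂ : Finset (Fin m) :=
    univ.filter (fun j : Fin m => (j.val = a ∨ a + 2 ≤ j.val) ∧ j.val ≤ m - 2) with hB₂
  have hB₁card : B₁.card = od - 1 := by
    have h := card_val_filter m 1 od hodm
    rw [hB₁, h]
  have hB₂card : B₂.card = m - 2 - a := by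
    have h := card_val_filter2 m a (by omega)
    rw [hB₂, h]
  have hMge : 2*p - 1 ≤ B₁.card + B₂.card := by
    rw [hB₁card, hB₂card]; omega
  have hcount : t + 1 ≤ (B₁.card + B₂.card).choose N :=
    master_count p _ N t hp hMge hN2 hN4 hpt
  -- parameter space
  have hPScard : t + 1 ≤ Fintype.card ↥((B₁.disjSum B₂).powersetCard N) := by
    rw [Fintype.card_coe, card_powersetCard, card_disjSum]
    exact hcount
  -- decomposition of a parameter
  have hS1B : ∀ W : ↥((B₁.disjSum B₂).powersetCard N), W.val.toLeft ⊆ B₁ := by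
    intro W x hx
    have h1 := (mem_powersetCard.1 W.2).1 (mem_toLeft.1 hx)
    exact (inl_mem_disjSum).1 h1
  have hS2B : ∀ W : ↥((B₁.disjSum B₂).powersetCard N), W.val.toRight ⊆ B₂ := by
    intro W x hx
    have h1 := (mem_powersetCard.1 W.2).1 (mem_toRight.1 hx)
    exact (inr_mem_disjSum).1 h1
  have hcards : ∀ W : ↥((B₁.disjSum B₂).powersetCard N), W.val.toLeft.card + W.val.toRight.card = N := by
    intro W
    rw [card_toLeft_add_card_toRight]
    exact (mem_powersetCard.1 W.2).2
  have hz0S : ∀ W : ↥((B₁.disjSum B₂).powersetCard N), z0 ∉ W.val.toLeft := by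
    intro W h'
    have := hS1B W h'
    rw [hB₁, mem_filter] at this
    have hx : 1 ≤ (0:ℕ) := this.2.1
    omega
  have hzlS : ∀ W : ↥((B₁.disjSum B₂).powersetCard N), zl ∉ W.val.toRight := by
    intro W h'
    have := hS2B W h'
    rw [hB₂, mem_filter] at this
    have hx : m - 1 ≤ m - 2 := this.2.2
    omega
  have hpre_len : ∀ W : ↥((B₁.disjSum B₂).powersetCard N), (TL m g (insert z0 W.val.toLeft)).length = W.val.toLeft.card + 1 := by
    intro W
    rw [TL_length, card_insert_of_notMem (hz0S W)]
  have hsuf_len : ∀ W : ↥((B₁.disjSum B₂).powersetCard N), (TL m g (insert zl W.val.toRight)).length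
      = W.val.toRight.card + 1 := by
    intro W
    rw [TL_length, card_insert_of_notMem (hzlS W)]
  have hInPre : ∀ (W : ↥((B₁.disjSum B₂).powersetCard N)) (x : Fin m), x ∈ insert z0 W.val.toLeft →
      A (g x) (cyc lc c hlc d) := by
    intro W x hx
    apply hInD
    rcases mem_insert.1 hx with rfl | hx
    · exact (show (0:ℕ) < od by omega)
    · have := hS1B W hx
      rw [hB₁, mem_filter] at this
      exact this.2.2
  have hOutSuf : ∀ (W : ↥((B₁.disjSum B₂).powersetCard N)) (f : Fin m), f ∈ insert zl W.val.toRight →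
      A (cyc lc c hlc (d+1)) (g f) := by
    intro W f hf
    rcases mem_insert.1 hf with rfl | hf
    · exact hOutHigh _ (show a + 2 ≤ m - 1 by omega)
    · have := hS2B W hf
      rw [hB₂, mem_filter] at this
      rcases this.2.1 with he | he
      · have : f = av := Fin.ext he
        rw [this]
        exact hOutA
      · exact hOutHigh _ he
  -- the list family
  refine ⟨g z0, g zl, ?_⟩
  refine hasWalks_of_family A k (t+1) (g z0) (g zl) (P := ↥((B₁.disjSum B₂).powersetCard N)) hPScard
    (fun W => TL m g (insert z0 W.val.toLeft) ++
      (midL lc c hlc d (g av) π ++ TL m g (insert zl W.val.toRight))) ?_ ?_ ?_ ?_ ?_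
  · intro W
    show (TL m g (insert z0 W.val.toLeft) ++
      (midL lc c hlc d (g av) π ++ TL m g (insert zl W.val.toRight))).length = k + 1
    simp only [List.length_append, midL_length]
    rw [hpre_len W, hsuf_len W]
    have := hcards W
    omega
  · intro W
    show (TL m g (insert z0 W.val.toLeft) ++
      (midL lc c hlc d (g av) π ++ TL m g (insert zl W.val.toRight))).Chain' A
    unfold List.Chain'
    rw [List.isChain_append]
    refine ⟨TL_chain hT _, ?_, ?_⟩
    · rw [List.isChain_append]
      refine ⟨midL_chain hc d (g av) π hOutA (hInD av (show (a:ℕ) < od by omega)),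
        TL_chain hT _, ?_⟩
      intro x hx y hy
      rw [midL_getLast? hlc _ _ _ hπ1] at hx
      rw [TL_head? _ (insert_nonempty _ _)] at hy
      simp only [Option.mem_def, Option.some_inj] at hx hy
      subst hx; subst hy
      exact hOutSuf W _ ((insert zl W.val.toRight).min'_mem (insert_nonempty _ _))
    · intro x hx y hy
      rw [TL_getLast? _ (insert_nonempty _ _)] at hx
      rw [head?_append_left' _ _ _ (midL_head? hlc d (g av) π hπ1)] at hy
      simp only [Option.mem_def, Option.some_inj] at hx hy
      subst hx; subst hy
      exact hInPre W _ ((insert z0 W.val.toLeft).max'_mem (insert_nonempty _ _))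
  · intro W W' h
    have h' : TL m g (insert z0 W.val.toLeft) ++
        (midL lc c hlc d (g av) π ++ TL m g (insert zl W.val.toRight)) =
        TL m g (insert z0 W'.val.toLeft) ++
        (midL lc c hlc d (g av) π ++ TL m g (insert zl W'.val.toRight)) := h
    have hmidhead : ∀ (X : Finset (Fin m)),
        ((midL lc c hlc d (g av) π ++ TL m g (insert zl X)).head?
          = some (cyc lc c hlc d)) := fun X =>
      head?_append_left' _ _ _ (midL_head? hlc d (g av) π hπ1)
    have hparts := append_parts_eq (fun x => ∃ j, x = g j)
      (fun x hx => mem_TL_isT hx) (fun x hx => mem_TL_isT hx) ?_ ?_ h'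
    · have hS1 : W.val.toLeft = W'.val.toLeft := by
        have h2 := TL_inj hg hparts.1
        have h3 := congrArg (fun T => Finset.erase T z0) h2
        simpa [Finset.erase_insert (hz0S W), Finset.erase_insert (hz0S W')] using h3
      have hS2 : W.val.toRight = W'.val.toRight := by
        have h4 := List.append_cancel_left hparts.2
        have h5 := TL_inj hg h4
        have h6 := congrArg (fun T => Finset.erase T zl) h5
        simpa [Finset.erase_insert (hzlS W), Finset.erase_insert (hzlS W')] using h6
      apply Subtype.ext
      rw [← toLeft_disjSum_toRight (u := W.val), ← toLeft_disjSum_toRight (u := W'.val),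
        hS1, hS2]
    · intro x hx hTx
      obtain ⟨j, hj⟩ := hTx
      rw [hmidhead _] at hx
      have hx' := Option.some_inj.1 hx
      have hgj : g j = cyc lc c hlc d := by rw [← hj, ← hx']
      exact g_ne_cyc hdisj hlc j _ hgj
    · intro x hx hTx
      obtain ⟨j, hj⟩ := hTx
      rw [hmidhead _] at hx
      have hx' := Option.some_inj.1 hx
      have hgj : g j = cyc lc c hlc d := by rw [← hj, ← hx']
      exact g_ne_cyc hdisj hlc j _ hgj
  · intro W h
    show (TL m g (insert z0 W.val.toLeft) ++
      (midL lc c hlc d (g av) π ++ TL m g (insert zl W.val.toRight))).get ⟨0, h⟩ = g z0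
    refine get_zero_append _ _ _ ?_ h
    rw [TL_head? _ (insert_nonempty _ _)]
    congr 2
    apply min'_eq_of_bot (mem_insert_self _ _)
    intro b _
    rw [Fin.le_def]
    exact Nat.zero_le _
  · intro W h
    show (TL m g (insert z0 W.val.toLeft) ++
      (midL lc c hlc d (g av) π ++ TL m g (insert zl W.val.toRight))).get ⟨k, h⟩ = g zl
    have hplen := hpre_len W
    have hslen := hsuf_len W
    have hsum := hcards W
    have h1 : (TL m g (insert z0 W.val.toLeft)).length ≤ k := by rw [hplen]; omega
    have h2 : k - (TL m g (insert z0 W.val.toLeft)).length <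
        (midL lc c hlc d (g av) π ++ TL m g (insert zl W.val.toRight)).length := by
      simp only [List.length_append, midL_length]
      rw [hplen, hslen]
      omega
    refine (get_of_append_right _ _ k h1 h2 h).trans ?_
    have h3 : (midL lc c hlc d (g av) π).length ≤
        k - (TL m g (insert z0 W.val.toLeft)).length := by
      rw [midL_length, hplen]; omega
    have h4 : k - (TL m g (insert z0 W.val.toLeft)).length
        - (midL lc c hlc d (g av) π).length < (TL m g (insert zl W.val.toRight)).length := by
      rw [midL_length, hplen, hslen]; omega
    refine (get_of_append_right _ _ _ h3 h4 h2).trans ?_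
    have e : k - (TL m g (insert z0 W.val.toLeft)).length - (midL lc c hlc d (g av) π).length
        = (TL m g (insert zl W.val.toRight)).length - 1 := by
      rw [midL_length, hplen, hslen]; omega
    refine (get_idx_congr _ e _ (by rw [hslen]; omega)).trans ?_
    apply get_last_of_getLast?
    rw [TL_getLast? _ (insert_nonempty _ _)]
    congr 2
    apply max'_eq_of_top (mem_insert_self _ _)
    intro b _
    rw [Fin.le_def]
    simp only [hzl]
    omega


lemma add_adjust_mod (lc x y : ℕ) (hlc : 1 ≤ lc) :
    (x + (y + lc - x % lc) % lc) % lc = y % lc := by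
  have h1 : x % lc < lc := Nat.mod_lt _ hlc
  rw [Nat.add_mod x]
  rw [Nat.mod_mod_of_dvd _ dvd_rfl]
  rw [Nat.add_mod_mod]
  have e : x % lc + (y + lc - x % lc) = y + lc := by omega
  rw [e, Nat.add_mod_right]

end Stmt8


open Stmt8 Finset in
/-- A cycle `C` and a disjoint transitive tournament `T` on at least
`2⌈√(2t+9/4)+1/2⌉+1` vertices, with an arc between every vertex of `C` and every
vertex of `T`, force `t+1` walks of every length `k ≥ max{t+1, 3⌈log₂(t+1)⌉}`
with the same endpoints. -/
theorem stmt_8 {V : Type*} (A : V → V → Prop) (t : ℕ) (ht : 1 ≤ t)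
    (lc : ℕ) (c : Fin (lc+1) → V) (hc : IsCycle A lc c)
    (m : ℕ) (g : Fin m → V) (hg : Function.Injective g)
    (hdisj : ∀ i j, g i ≠ c j)
    (hm : (2 * ⌈Real.sqrt (2 * (t : ℝ) + 9/4) + 1/2⌉ + 1 : ℤ) ≤ (m : ℤ))
    (hT : ∀ i j : Fin m, A (g i) (g j) ↔ i < j)
    (hbetween : ∀ i j, A (c i) (g j) ∨ A (g j) (c i))
    (k : ℕ) (hk : max (t+1) (3 * Nat.clog 2 (t+1)) ≤ k) :
    ∃ u v, HasWalks A k (t+1) u v := by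
  classical
  have hlc : 1 ≤ lc := hc.1
  -- numeric setup
  set Pz : ℤ := ⌈Real.sqrt (2 * (t : ℝ) + 9/4) + 1/2⌉ with hPz
  have hle : Real.sqrt (2 * (t : ℝ) + 9/4) + 1/2 ≤ (Pz : ℝ) := Int.le_ceil _
  have hsqnn : (0:ℝ) ≤ Real.sqrt (2 * (t : ℝ) + 9/4) := Real.sqrt_nonneg _
  have ht1 : (1:ℝ) ≤ (t:ℝ) := by exact_mod_cast ht
  have hP3 : 3 ≤ Pz := by
    have h32 : (3:ℝ)/2 < Real.sqrt (2 * (t : ℝ) + 9/4) := by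
      have h0 : ((3:ℝ)/2) = Real.sqrt ((3/2)^2) := (Real.sqrt_sq (by norm_num)).symm
      rw [h0]
      apply Real.sqrt_lt_sqrt (by positivity)
      nlinarith
    have h2 : (2:ℝ) < Real.sqrt (2 * (t : ℝ) + 9/4) + 1/2 := by linarith
    have := Int.lt_ceil.mpr (show ((2:ℤ):ℝ) < Real.sqrt (2 * (t : ℝ) + 9/4) + 1/2 by
      push_cast; linarith)
    omega
  have hsqr : (2*(t:ℝ) + 2) ≤ (Pz:ℝ) * ((Pz:ℝ) - 1) := by
    have h1 : Real.sqrt (2 * (t : ℝ) + 9/4) ≤ (Pz:ℝ) - 1/2 := by linarith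
    have h2 := Real.sq_sqrt (show (0:ℝ) ≤ 2 * (t:ℝ) + 9/4 by positivity)
    nlinarith
  set p : ℕ := Pz.toNat with hpdef
  have hpz : (p : ℤ) = Pz := Int.toNat_of_nonneg (by omega)
  have hp3 : 3 ≤ p := by omega
  have hpt : 2*(t+1) ≤ p*(p-1) := by
    have hZ : (2*((t:ℤ)+1)) ≤ (p:ℤ) * ((p:ℤ)-1) := by
      rw [hpz]
      exact_mod_cast hsqr
    have h1 : ((p:ℤ)-1) = ((p-1 : ℕ) : ℤ) := by push_cast [Nat.cast_sub (by omega : 1 ≤ p)]; ring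
    rw [h1] at hZ
    exact_mod_cast hZ
  have hm2p : 2*p + 1 ≤ m := by
    have : (2*Pz + 1 : ℤ) ≤ (m:ℤ) := hm
    omega
  have hm7 : 7 ≤ m := by omega
  -- k facts
  have hkt : t + 1 ≤ k := (le_max_left _ _).trans hk
  have hkc : 3 * Nat.clog 2 (t+1) ≤ k := (le_max_right _ _).trans hk
  have hcl1 : 0 < Nat.clog 2 (t+1) := Nat.clog_pos (by norm_num) (by omega)
  have hk3 : 3 ≤ k := by omega
  have hclpow : t + 1 ≤ 2 ^ (k / 3) := by
    have h1 : t + 1 ≤ 2 ^ (Nat.clog 2 (t+1)) := Nat.le_pow_clog (by norm_num) _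
    exact h1.trans (Nat.pow_le_pow_right (by norm_num) (by omega))
  have h2p : t + 1 ≤ 2 ^ (p - 1) := by
    have h1 : p * (p-1) ≤ 2^p := mul_pred_le_two_pow p hp3
    have h2 : 2^p = 2 * 2^(p-1) := by
      rw [← pow_succ']
      congr 1
      omega
    omega
  by_cases hksmall : k + 3 ≤ m
  · -- pure tournament walks
    apply family_pureT hg hT t k hm7 hk3 hksmall
    have h1 : t + 1 ≤ (m-2).choose 2 := le_choose_two p (m-2) t hp3 hpt (by omega)
    exact h1.trans (choose2_le_choose (m-2) (k-1) (by omega) (by omega))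
  · have hkm : m ≤ k + 2 := by omega
    have hk5 : 5 ≤ k := by omega
    have hkp : p ≤ k := by omega
    by_cases hcross : ∃ (i : Fin (lc+1)) (j j' : Fin m),
        j.val + 2 ≤ j'.val ∧ A (c i) (g j) ∧ A (g j') (c i)
    · -- CASE I : binary gadget
      obtain ⟨i, j, j', hjj, hx1, hx2⟩ := hcross
      have hxc : c i = cyc lc c hc.1 i.val := cyc_eq_c hc.1 hc.2.2.1 i
      set j'' : Fin m := ⟨j.val + 1, by omega⟩ with hj''
      have hlt1 : j < j' := by rw [Fin.lt_def]; omega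
      have hlt2 : j'' < j' := by
        rw [Fin.lt_def]
        exact (show j.val + 1 < j'.val by omega)
      have hlt3 : j < j'' := by
        rw [Fin.lt_def]
        exact (show j.val < j.val + 1 by omega)
      rcases hbetween i j'' with hdir | hdir
      · -- variant A
        refine family_gadget hc (c i) i.val hxc
          (fun b => if b then g j'' else g j) (fun _ => g j')
          ?_ ?_ ?_ ?_ t k hclpow hk3
        · intro b; cases b
          · simpa using hx1
          · simpa using hdir
        · intro b; cases b
          · simpa using (hT j j').2 hlt1
          · simpa using (hT j'' j').2 hlt2
        · intro b; exact hx2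
        · intro b b' h1 _
          cases b <;> cases b'
          · rfl
          · exfalso
            simp only [if_pos, if_neg, Bool.false_eq_true, ite_true, ite_false] at h1
            have hv := congrArg Fin.val (hg h1)
            have hx : j.val = j.val + 1 := hv
            omega
          · exfalso
            simp only [if_pos, if_neg, Bool.false_eq_true, ite_true, ite_false] at h1
            have hv := congrArg Fin.val (hg h1)
            have hx : j.val + 1 = j.val := hv
            omega
          · rfl
      · -- variant B
        refine family_gadget hc (c i) i.val hxc
          (fun _ => g j) (fun b => if b then g j' else g j'')
          ?_ ?_ ?_ ?_ t k hclpow hk3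
        · intro b; exact hx1
        · intro b; cases b
          · simpa using (hT j j'').2 hlt3
          · simpa using (hT j j').2 hlt1
        · intro b; cases b
          · simpa using hdir
          · simpa using hx2
        · intro b b' _ h2
          cases b <;> cases b'
          · rfl
          · exfalso
            simp only [if_pos, if_neg, Bool.false_eq_true, ite_true, ite_false] at h2
            have hv := congrArg Fin.val (hg h2)
            have hx : j.val + 1 = j'.val := hv
            omega
          · exfalso
            simp only [if_pos, if_neg, Bool.false_eq_true, ite_true, ite_false] at h2
            have hv := congrArg Fin.val (hg h2)
            have hx : j'.val = j.val + 1 := hv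
            omega
          · rfl
    · -- CASE II
      have hstar : ∀ (n : ℕ) (j j' : Fin m), j.val + 2 ≤ j'.val →
          A (cyc lc c hc.1 n) (g j) → A (g j') (cyc lc c hc.1 n) → False := by
        intro n j j' hjj h1 h2
        exact hcross ⟨⟨n % lc, by have := Nat.mod_lt n hlc; omega⟩, j, j', hjj, h1, h2⟩
      have hbet : ∀ (n : ℕ) (j : Fin m),
          A (cyc lc c hc.1 n) (g j) ∨ A (g j) (cyc lc c hc.1 n) := by
        intro n j
        exact hbetween ⟨n % lc, by have := Nat.mod_lt n hlc; omega⟩ j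
      by_cases hsink : ∀ (n : ℕ) (j : Fin m), j.val < p → ¬ A (cyc lc c hc.1 n) (g j)
      · exact family_sink hc hg hT hdisj t k p hp3 (by omega) hkp h2p
          (fun n j hj => (hbet n j).resolve_left (hsink n j hj))
      · push_neg at hsink
        obtain ⟨n₀, j₀, hj₀p, hj₀A⟩ := hsink
        by_cases hsource : ∀ n : ℕ, ∃ j : Fin m, j.val + p + 2 ≤ m ∧ A (cyc lc c hc.1 n) (g j)
        · refine family_source hc hg hT hdisj t k p hp3 (by omega) hkp h2p ?_
          intro n j hj
          obtain ⟨j', hj', hA'⟩ := hsource n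
          by_contra hnA
          have hIn := (hbet n j).resolve_left hnA
          exact hstar n j' j (by omega) hA' hIn
        · push_neg at hsource
          obtain ⟨n₁, hn₁⟩ := hsource
          -- min out-level function
          set o : ℕ → ℕ := fun n =>
            sInf {q | q = m ∨ ∃ (hq : q < m), A (cyc lc c hc.1 n) (g ⟨q, hq⟩)} with ho
          have homem : ∀ n, o n = m ∨
              ∃ (hq : o n < m), A (cyc lc c hc.1 n) (g ⟨o n, hq⟩) := by
            intro n
            exact Nat.sInf_mem (⟨m, Or.inl rfl⟩ :
              {q | q = m ∨ ∃ (hq : q < m), A (cyc lc c hc.1 n) (g ⟨q, hq⟩)}.Nonempty)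
          have hole : ∀ n, o n ≤ m := fun n => Nat.sInf_le (Or.inl rfl)
          have homin : ∀ (n : ℕ) (j : Fin m), j.val < o n → ¬ A (cyc lc c hc.1 n) (g j) := by
            intro n j hj hA
            have := Nat.notMem_of_lt_sInf (show j.val < o n from hj)
            exact this (Or.inr ⟨j.isLt, hA⟩)
          have hoout : ∀ (n : ℕ) (hn : o n < m), A (cyc lc c hc.1 n) (g ⟨o n, hn⟩) := by
            intro n hn
            rcases homem n with he | ⟨hq, hA⟩
            · omega
            · exact hA
          have hperiod : ∀ x y : ℕ, x % lc = y % lc → o x = o y := by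
            intro x y hxy
            have hcyc : cyc lc c hc.1 x = cyc lc c hc.1 y := cyc_congr hc.1 hxy
            have hset : {q | q = m ∨ ∃ (hq : q < m), A (cyc lc c hc.1 x) (g ⟨q, hq⟩)}
                = {q | q = m ∨ ∃ (hq : q < m), A (cyc lc c hc.1 y) (g ⟨q, hq⟩)} := by
              rw [hcyc]
            show sInf {q | q = m ∨ ∃ (hq : q < m), A (cyc lc c hc.1 x) (g ⟨q, hq⟩)}
              = sInf {q | q = m ∨ ∃ (hq : q < m), A (cyc lc c hc.1 y) (g ⟨q, hq⟩)}
            rw [hset]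
          -- endpoint values
          have hon₀ : o n₀ ≤ j₀.val := by
            apply Nat.sInf_le
            exact Or.inr ⟨j₀.isLt, by
              have he : (⟨j₀.val, j₀.isLt⟩ : Fin m) = j₀ := rfl
              rw [he]; exact hj₀A⟩
          have hon₁ : m - p - 1 ≤ o n₁ := by
            by_contra hlt
            push_neg at hlt
            have h1 : o n₁ < m := by omega
            exact hn₁ ⟨o n₁, h1⟩ (show o n₁ + p + 2 ≤ m by omega) (hoout n₁ h1)
          -- crossing
          have hcrossing : ∃ dd : ℕ, p ≤ o dd ∧ o (dd+1) < p := by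
            have aux : ∀ (len st : ℕ), p ≤ o st → o (st + len) < p →
                ∃ dd, p ≤ o dd ∧ o (dd+1) < p := by
              intro len
              induction len with
              | zero =>
                intro st h1 h2
                simp at h2
                omega
              | succ q ih =>
                intro st h1 h2
                by_cases hnext : o (st+1) < p
                · exact ⟨st, h1, hnext⟩
                · refine ih (st+1) (by omega) ?_
                  rw [show st+1+q = st + (q+1) from by omega]
                  exact h2
            have h1 : p ≤ o n₁ := by omega
            have hper : o (n₁ + ((n₀ + lc - n₁ % lc) % lc)) = o n₀ := by
              apply hperiod
              rw [add_adjust_mod lc n₁ n₀ hlc]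
            exact aux _ n₁ h1 (by rw [hper]; omega)
          obtain ⟨d, hpd, hdp⟩ := hcrossing
          -- master family
          have ham : o (d+1) < m := by omega
          refine family_master hc hg hT hdisj t k p hp3 hm2p hpt hk5 d (o (d+1)) (o d)
            (by omega) hpd (hole d) ham (hoout (d+1) ham) ?_ ?_
          · intro j hj
            exact ((hbet d j).resolve_left (homin d j hj))
          · intro j hj
            by_contra hnA
            have hIn := (hbet (d+1) j).resolve_left hnA
            exact hstar (d+1) ⟨o (d+1), ham⟩ j hj (hoout (d+1) ham) hIn
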